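/- Fix masses m, M with 2M > m > 0. There exists a constant c > 0, depending only on m and M, with the following property. Let s₁, s₂ ∈ {+1,−1}, let k, k₁, k₂ be nonnegative integers and j, j₁, j₂ integers, and let φ, u₁, u₂ : ℝ × ℝ³ → ℂ be Schwartz functions whose space-time Fourier transforms satisfy: supp φ̂ ⊆ {(τ,ξ) : |ξ| ≤ 2^{k+2}, (k ≥ 1 ⟹ |ξ| ≥ 2^{k−2}), and 2^{j−2} ≤ |τ + ⟨ξ⟩_m| ≤ 2^{j+2}}, and for i = 1,2, supp ûᵢ ⊆ {(τ,ξ) : |ξ| ≤ 2^{kᵢ+2}, (kᵢ ≥ 1 ⟹ |ξ| ≥ 2^{kᵢ−2}), and 2^{jᵢ−2} ≤ |τ + sᵢ⟨ξ⟩_M| ≤ 2^{jᵢ+2}}. Assume either (s₁,s₂) = (+1,−1), or ((s₁,s₂) = (−1,+1) and k ≤ min(k₁,k₂) − c). If max(j, j₁, j₂) ≤ max(k, k₁, k₂) − c, then ∫_{ℝ×ℝ³} φ(t,x) u₁(t,x) \overline{u₂(t,x)} dt dx = 0. -/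

import Mathlib

set_option maxHeartbeats 1000000


noncomputable section

open MeasureTheory Complex
open scoped RealInnerProductSpace FourierTransform Real

/-- Spacetime `ℝ × ℝ³`, realized as `ℝ⁴`, with coordinate `0` playing the role of the
time variable `t` (resp. the frequency `τ`) and coordinates `1,2,3` the space variables. -/
abbrev SpaceTime := EuclideanSpace ℝ (Fin 4)

/-- The spatial part `ξ ∈ ℝ³` of a spacetime frequency `ζ = (τ, ξ)`. -/
def spatial (ζ : SpaceTime) : EuclideanSpace ℝ (Fin 3) := WithLp.toLp 2 (fun i : Fin 3 => ζ i.succ)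

/-- The space-time Fourier transform `v̂(ζ) = ∫ e^{−i⟨z,ζ⟫} v(z) dz` (so that
`v̂(τ,ξ) = ∫ e^{−i(tτ+x·ξ)} v(t,x) dt dx`). -/
def spacetimeFT (v : SpaceTime → ℂ) (ζ : SpaceTime) : ℂ :=
  ∫ z : SpaceTime, Complex.exp (-(Complex.I * ((⟪z, ζ⟫ : ℝ) : ℂ))) * v z

/-- The Japanese bracket `⟨ξ⟩_a := √(|ξ|² + a²)`. -/
def jbracket (a : ℝ) (ξ : EuclideanSpace ℝ (Fin 3)) : ℝ :=
  Real.sqrt (‖ξ‖ ^ 2 + a ^ 2)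

/-- The region `{(τ,ξ) : |ξ| ≤ 2^{k+2}, (k ≥ 1 ⟹ |ξ| ≥ 2^{k−2}),
2^{j−2} ≤ |τ + sgn·⟨ξ⟩_a| ≤ 2^{j+2}}` of spacetime frequencies with spatial frequency
comparable to `2^k` and modulation (relative to the mass-`a`, sign-`sgn` characteristic
hypersurface) comparable to `2^j`. -/
def kgRegion (a sgn : ℝ) (k : ℕ) (j : ℤ) : Set SpaceTime :=
  {ζ | ‖spatial ζ‖ ≤ 2 ^ (k + 2) ∧
    (1 ≤ k → (2 : ℝ) ^ ((k : ℤ) - 2) ≤ ‖spatial ζ‖) ∧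
    (2 : ℝ) ^ (j - 2) ≤ |ζ 0 + sgn * jbracket a (spatial ζ)| ∧
    |ζ 0 + sgn * jbracket a (spatial ζ)| ≤ (2 : ℝ) ^ (j + 2)}


-- char lemmas
lemma conj_char (r : ℝ) : (starRingEnd ℂ) (Real.fourierChar r : ℂ) = (Real.fourierChar (-r) : ℂ) := by
  rw [Real.fourierChar_apply, Real.fourierChar_apply, ← Complex.exp_conj]
  rw [map_mul, Complex.conj_I, Complex.conj_ofReal]
  push_cast
  ring

lemma char_mul (a b : ℝ) :
    (Real.fourierChar a : ℂ) * (Real.fourierChar b : ℂ) = (Real.fourierChar (a + b) : ℂ) := by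
  rw [Real.fourierChar_apply, Real.fourierChar_apply, Real.fourierChar_apply, ← Complex.exp_add]
  congr 1
  push_cast
  ring

lemma norm_char (r : ℝ) : ‖(Real.fourierChar r : ℂ)‖ = 1 := by
  rw [Real.fourierChar_apply]; exact Complex.norm_exp_ofReal_mul_I _

lemma continuous_char_prod :
    Continuous (fun p : SpaceTime × SpaceTime => (Real.fourierChar ⟪p.1, p.2⟫ : ℂ)) :=
  continuous_subtype_val.comp (Real.continuous_fourierChar.comp continuous_inner)

/-- Fubini helper. -/
lemma swap_helper (F G : SpaceTime → ℂ) (hFc : Continuous F) (hFi : Integrable F)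
    (hGc : Continuous G) (hGi : Integrable G) :
    ∫ z : SpaceTime, (∫ ζ : SpaceTime, (Real.fourierChar ⟪z, ζ⟫ : ℂ) * F ζ) * G z
      = ∫ ζ : SpaceTime, F ζ * ∫ z : SpaceTime, (Real.fourierChar ⟪z, ζ⟫ : ℂ) * G z := by
  have hcont : Continuous (fun p : SpaceTime × SpaceTime =>
      (Real.fourierChar ⟪p.1, p.2⟫ : ℂ) * F p.2 * G p.1) :=
    (continuous_char_prod.mul (hFc.comp continuous_snd)).mul (hGc.comp continuous_fst)
  have hint : Integrable (Function.uncurry fun z ζ : SpaceTime =>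
      (Real.fourierChar ⟪z, ζ⟫ : ℂ) * F ζ * G z) (volume.prod volume) := by
    refine (hGi.norm.mul_prod hFi.norm).mono' hcont.aestronglyMeasurable ?_
    filter_upwards with p
    simp only [Function.uncurry, norm_mul, norm_char, norm_norm, one_mul]
    exact le_of_eq (mul_comm _ _)
  calc ∫ z : SpaceTime, (∫ ζ : SpaceTime, (Real.fourierChar ⟪z, ζ⟫ : ℂ) * F ζ) * G z
      = ∫ z : SpaceTime, ∫ ζ : SpaceTime, (Real.fourierChar ⟪z, ζ⟫ : ℂ) * F ζ * G z := by
        congr 1 with z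
        rw [← integral_mul_const]
    _ = ∫ ζ : SpaceTime, ∫ z : SpaceTime, (Real.fourierChar ⟪z, ζ⟫ : ℂ) * F ζ * G z :=
        integral_integral_swap hint
    _ = ∫ ζ : SpaceTime, F ζ * ∫ z : SpaceTime, (Real.fourierChar ⟪z, ζ⟫ : ℂ) * G z := by
        congr 1 with ζ
        rw [← integral_const_mul]
        congr 1 with z
        ring

lemma ftSchwartz_integrable (f : SchwartzMap SpaceTime ℂ) : Integrable (𝓕 ⇑f) := by
  have : 𝓕 ⇑f = ⇑(SchwartzMap.fourierTransformCLM ℂ f) := by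
    simp [SchwartzMap.fourierTransformCLM_apply, SchwartzMap.fourier_coe]
  rw [this]
  exact (SchwartzMap.fourierTransformCLM ℂ f).integrable

lemma ftSchwartz_continuous (f : SchwartzMap SpaceTime ℂ) : Continuous (𝓕 ⇑f) := by
  have : 𝓕 ⇑f = ⇑(SchwartzMap.fourierTransformCLM ℂ f) := by
    simp [SchwartzMap.fourierTransformCLM_apply, SchwartzMap.fourier_coe]
  rw [this]
  exact (SchwartzMap.fourierTransformCLM ℂ f).continuous

lemma schwartz_eq_integral (f : SchwartzMap SpaceTime ℂ) (z : SpaceTime) :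
    f z = ∫ ζ : SpaceTime, (Real.fourierChar ⟪z, ζ⟫ : ℂ) * 𝓕 (⇑f) ζ := by
  conv_lhs => rw [← f.continuous.fourierInv_fourier_eq f.integrable (ftSchwartz_integrable f)]
  rw [Real.fourierInv_eq]
  congr 1 with ζ
  rw [Circle.smul_def, real_inner_comm, smul_eq_mul]

lemma key_vanish (φ u₁ u₂ : SchwartzMap SpaceTime ℂ)
    (h : ∀ ζ η : SpaceTime, 𝓕 ⇑φ ζ ≠ 0 → 𝓕 ⇑u₁ η ≠ 0 → 𝓕 ⇑u₂ (ζ + η) = 0) :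
    ∫ z : SpaceTime, φ z * u₁ z * (starRingEnd ℂ) (u₂ z) = 0 := by
  have hu₁b : ∃ C, ∀ z : SpaceTime, ‖u₁ z‖ ≤ C :=
    ⟨(SchwartzMap.seminorm ℝ 0 0) u₁, fun z => SchwartzMap.norm_le_seminorm ℝ u₁ z⟩
  set G : SpaceTime → ℂ := fun z => u₁ z * (starRingEnd ℂ) (u₂ z) with hG
  have hGc : Continuous G := u₁.continuous.mul (Complex.continuous_conj.comp u₂.continuous)
  have hGi : Integrable G := by
    have h2 : Integrable (fun z : SpaceTime => (starRingEnd ℂ) (u₂ z)) := by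
      refine (u₂.integrable (μ := volume)).norm.mono'
        ((Complex.continuous_conj.comp u₂.continuous).aestronglyMeasurable) ?_
      filter_upwards with z
      simp
    exact h2.bdd_mul u₁.continuous.aestronglyMeasurable (ae_of_all _ hu₁b.choose_spec)
  have step1 : ∫ z : SpaceTime, φ z * u₁ z * (starRingEnd ℂ) (u₂ z)
      = ∫ z : SpaceTime, (∫ ζ : SpaceTime, (Real.fourierChar ⟪z, ζ⟫ : ℂ) * 𝓕 (⇑φ) ζ) * G z := by
    congr 1 with z
    rw [← schwartz_eq_integral φ z, hG]
    ring
  rw [step1, swap_helper _ G (ftSchwartz_continuous φ) (ftSchwartz_integrable φ) hGc hGi]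
  have main : ∀ ζ : SpaceTime,
      𝓕 (⇑φ) ζ * ∫ z : SpaceTime, (Real.fourierChar ⟪z, ζ⟫ : ℂ) * G z = 0 := by
    intro ζ
    rcases eq_or_ne (𝓕 (⇑φ) ζ) 0 with h0 | h0
    · rw [h0, zero_mul]
    have hGζc : Continuous (fun z : SpaceTime =>
        (Real.fourierChar ⟪z, ζ⟫ : ℂ) * (starRingEnd ℂ) (u₂ z)) := by
      refine Continuous.mul ?_ (Complex.continuous_conj.comp u₂.continuous)
      exact continuous_subtype_val.comp
        (Real.continuous_fourierChar.comp (continuous_id.inner continuous_const))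
    have hGζi : Integrable (fun z : SpaceTime =>
        (Real.fourierChar ⟪z, ζ⟫ : ℂ) * (starRingEnd ℂ) (u₂ z)) := by
      refine (u₂.integrable (μ := volume)).norm.mono' hGζc.aestronglyMeasurable ?_
      filter_upwards with z
      simp [norm_char]
    have e2 : ∫ z : SpaceTime, (Real.fourierChar ⟪z, ζ⟫ : ℂ) * G z
        = ∫ z : SpaceTime, (∫ η : SpaceTime, (Real.fourierChar ⟪z, η⟫ : ℂ) * 𝓕 (⇑u₁) η) *
            ((Real.fourierChar ⟪z, ζ⟫ : ℂ) * (starRingEnd ℂ) (u₂ z)) := by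
      congr 1 with z
      rw [← schwartz_eq_integral u₁ z, hG]
      ring
    rw [e2, swap_helper _ _ (ftSchwartz_continuous u₁) (ftSchwartz_integrable u₁) hGζc hGζi]
    have inner0 : ∀ η : SpaceTime,
        𝓕 (⇑u₁) η * ∫ z : SpaceTime, (Real.fourierChar ⟪z, η⟫ : ℂ) *
          ((Real.fourierChar ⟪z, ζ⟫ : ℂ) * (starRingEnd ℂ) (u₂ z)) = 0 := by
      intro η
      rcases eq_or_ne (𝓕 (⇑u₁) η) 0 with h1 | h1
      · rw [h1, zero_mul]
      have : ∫ z : SpaceTime, (Real.fourierChar ⟪z, η⟫ : ℂ) *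
          ((Real.fourierChar ⟪z, ζ⟫ : ℂ) * (starRingEnd ℂ) (u₂ z))
          = (starRingEnd ℂ) (𝓕 (⇑u₂) (η + ζ)) := by
        rw [Real.fourier_eq, ← integral_conj]
        congr 1 with z
        rw [Circle.smul_def, smul_eq_mul, map_mul, conj_char, neg_neg,
          inner_add_right, ← char_mul]
        ring
      rw [this, show η + ζ = ζ + η from add_comm _ _, h ζ η h0 h1, map_zero, mul_zero]
    rw [show (∫ η : SpaceTime, 𝓕 (⇑u₁) η * ∫ z : SpaceTime, (Real.fourierChar ⟪z, η⟫ : ℂ) *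
          ((Real.fourierChar ⟪z, ζ⟫ : ℂ) * (starRingEnd ℂ) (u₂ z))) = ∫ _ : SpaceTime, (0:ℂ)
      from by congr 1 with η; exact inner0 η, integral_zero, mul_zero]
  rw [show (∫ ζ : SpaceTime, 𝓕 (⇑φ) ζ * ∫ z : SpaceTime, (Real.fourierChar ⟪z, ζ⟫ : ℂ) * G z)
      = ∫ _ : SpaceTime, (0:ℂ) from by congr 1 with ζ; exact main ζ, integral_zero]

lemma ft_eq_spacetimeFT (v : SpaceTime → ℂ) (w : SpaceTime) :
    𝓕 v w = spacetimeFT v ((2 * π) • w) := by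
  rw [Real.fourier_eq', spacetimeFT]
  congr 1 with z
  rw [smul_eq_mul]
  congr 1
  rw [real_inner_smul_right]
  push_cast
  ring

lemma supp_transfer {v : SpaceTime → ℂ} {S : Set SpaceTime}
    (h : Function.support (spacetimeFT v) ⊆ S) {w : SpaceTime} (hw : 𝓕 v w ≠ 0) :
    (2 * π) • w ∈ S := by
  apply h
  rw [Function.mem_support, ← ft_eq_spacetimeFT]
  exact hw

lemma jbracket_nonneg (a : ℝ) (ξ : EuclideanSpace ℝ (Fin 3)) : 0 ≤ jbracket a ξ :=
  Real.sqrt_nonneg _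

lemma mass_le_jbracket (a : ℝ) (ha : 0 ≤ a) (ξ : EuclideanSpace ℝ (Fin 3)) :
    a ≤ jbracket a ξ := by
  rw [jbracket]
  calc a = Real.sqrt (a ^ 2) := (Real.sqrt_sq ha).symm
    _ ≤ _ := Real.sqrt_le_sqrt (by nlinarith [norm_nonneg ξ])

lemma norm_le_jbracket (a : ℝ) (ξ : EuclideanSpace ℝ (Fin 3)) : ‖ξ‖ ≤ jbracket a ξ := by
  rw [jbracket]
  calc ‖ξ‖ = Real.sqrt (‖ξ‖ ^ 2) := (Real.sqrt_sq (norm_nonneg ξ)).symm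
    _ ≤ _ := Real.sqrt_le_sqrt (by nlinarith)

lemma jbracket_le (a : ℝ) (ha : 0 ≤ a) (ξ : EuclideanSpace ℝ (Fin 3)) :
    jbracket a ξ ≤ ‖ξ‖ + a := by
  rw [jbracket]
  calc Real.sqrt (‖ξ‖ ^ 2 + a ^ 2) ≤ Real.sqrt ((‖ξ‖ + a) ^ 2) :=
        Real.sqrt_le_sqrt (by nlinarith [norm_nonneg ξ])
    _ = ‖ξ‖ + a := Real.sqrt_sq (by positivity)

lemma spatial_add (A B : SpaceTime) : spatial (A + B) = spatial A + spatial B := by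
  ext i; simp [spatial]

lemma add_apply0 (A B : SpaceTime) : (A + B) 0 = A 0 + B 0 := rfl

lemma rpow_eq_zpow_sub2 (n : ℕ) : (2:ℝ) ^ ((n:ℝ) - 2) = (2:ℝ) ^ ((n:ℤ) - 2) := by
  rw [← Real.rpow_intCast 2 ((n:ℤ) - 2)]
  norm_num

lemma rpow_eq_pow_add2 (n : ℕ) : (2:ℝ) ^ ((n:ℝ) + 2) = (2:ℝ) ^ (n + 2) := by
  rw [← Real.rpow_natCast 2 (n + 2)]
  push_cast
  ring_nf

lemma geom (m M : ℝ) (hm : 0 < m) (hmM : m < 2 * M) :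
    ∃ c > (0 : ℝ), ∀ s₁ s₂ : ℝ, (s₁ = 1 ∨ s₁ = -1) → (s₂ = 1 ∨ s₂ = -1) →
      ∀ k k₁ k₂ : ℕ, ∀ j j₁ j₂ : ℤ,
        ((s₁ = 1 ∧ s₂ = -1) ∨
          (s₁ = -1 ∧ s₂ = 1 ∧ (k : ℝ) ≤ min (k₁ : ℝ) (k₂ : ℝ) - c)) →
        ((max j (max j₁ j₂) : ℤ) : ℝ) ≤ max (k : ℝ) (max (k₁ : ℝ) (k₂ : ℝ)) - c →
        ∀ A B : SpaceTime, A ∈ kgRegion m 1 k j → B ∈ kgRegion M s₁ k₁ j₁ →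
          A + B ∈ kgRegion M s₂ k₂ j₂ → False := by
  have hM : 0 < M := by linarith
  set δ : ℝ := min m (1/4) with hδdef
  have hδ : 0 < δ := lt_min hm (by norm_num)
  have hδ4 : δ ≤ 1/4 := min_le_right _ _
  have hδm : δ ≤ m := min_le_left _ _
  set ε : ℝ := 2 * M - m with hεdef
  have hε : 0 < ε := by simp only [hεdef]; linarith
  have hεM : 0 < ε / (4 * M) := by positivity
  set c : ℝ := max 1 (max (5 - Real.logb 2 δ) (7 - Real.logb 2 (ε / (4 * M)))) with hcdef
  have hc1 : (1:ℝ) ≤ c := le_max_left _ _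
  have hcδ : (2:ℝ) ^ ((4:ℝ) - c) < δ := by
    have h5 : 5 - Real.logb 2 δ ≤ c := le_trans (le_max_left _ _) (le_max_right _ _)
    calc (2:ℝ) ^ ((4:ℝ) - c) ≤ (2:ℝ) ^ (Real.logb 2 δ - 1) :=
          Real.rpow_le_rpow_of_exponent_le one_le_two (by linarith)
      _ = δ / 2 := by
          rw [Real.rpow_sub two_pos, Real.rpow_logb two_pos (by norm_num) hδ, Real.rpow_one]
      _ < δ := by linarith
  have hcε : (2:ℝ) ^ ((7:ℝ) - c) ≤ ε / (4 * M) := by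
    have h7 : 7 - Real.logb 2 (ε / (4 * M)) ≤ c := le_trans (le_max_right _ _) (le_max_right _ _)
    calc (2:ℝ) ^ ((7:ℝ) - c) ≤ (2:ℝ) ^ (Real.logb 2 (ε / (4 * M))) :=
          Real.rpow_le_rpow_of_exponent_le one_le_two (by linarith)
      _ = ε / (4 * M) := Real.rpow_logb two_pos (by norm_num) hεM
  refine ⟨c, lt_of_lt_of_le one_pos hc1, ?_⟩
  intro s₁ s₂ hs₁ hs₂ k k₁ k₂ j j₁ j₂ hcase hJle A B hA hB hAB
  simp only [kgRegion, Set.mem_setOf_eq, spatial_add, add_apply0] at hA hB hAB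
  obtain ⟨hA1, hA2, hA3, hA4⟩ := hA
  obtain ⟨hB1, hB2, hB3, hB4⟩ := hB
  obtain ⟨hC1, hC2, hC3, hC4⟩ := hAB
  set ξ₀ := spatial A with hξ₀
  set ξ₁ := spatial B with hξ₁
  set τ₀ := A 0 with hτ₀
  set τ₁ := B 0 with hτ₁
  set jb₀ := jbracket m ξ₀ with hjb₀
  set jb₁ := jbracket M ξ₁ with hjb₁
  set jb₂ := jbracket M (ξ₀ + ξ₁) with hjb₂
  set J : ℤ := max j (max j₁ j₂) with hJdef
  set b : ℝ := (2:ℝ) ^ (J + 2) with hbdef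
  have hbpos : 0 < b := by rw [hbdef]; positivity
  set Kr : ℝ := max (k:ℝ) (max (k₁:ℝ) (k₂:ℝ)) with hKrdef
  have hKrN : Kr = ((max k (max k₁ k₂) : ℕ) : ℝ) := by
    simp [hKrdef, Nat.cast_max]
  -- modulation bounds
  have hm0 : |τ₀ + 1 * jb₀| ≤ b :=
    le_trans hA4 (zpow_le_zpow_right₀ one_le_two (by simp [hJdef]))
  have hm1 : |τ₁ + s₁ * jb₁| ≤ b :=
    le_trans hB4 (zpow_le_zpow_right₀ one_le_two (by
      simp only [hJdef]
      have := le_max_left j₁ j₂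
      have := le_max_right j (max j₁ j₂)
      omega))
  have hm2 : |(τ₀ + τ₁) + s₂ * jb₂| ≤ b :=
    le_trans hC4 (zpow_le_zpow_right₀ one_le_two (by
      simp only [hJdef]
      have := le_max_right j₁ j₂
      have := le_max_right j (max j₁ j₂)
      omega))
  obtain ⟨hm0a, hm0b⟩ := abs_le.mp hm0
  obtain ⟨hm1a, hm1b⟩ := abs_le.mp hm1
  obtain ⟨hm2a, hm2b⟩ := abs_le.mp hm2
  -- b as rpow, and 3b bound
  have hbr : b = (2:ℝ) ^ ((J:ℝ) + 2) := by
    rw [hbdef, ← Real.rpow_intCast 2 (J + 2)]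
    push_cast
    ring_nf
  have h3b : 3 * b ≤ (2:ℝ) ^ ((J:ℝ) + 4) := by
    have : (2:ℝ) ^ ((J:ℝ) + 4) = (2:ℝ) ^ ((J:ℝ) + 2) * (2:ℝ) ^ (2:ℝ) := by
      rw [← Real.rpow_add two_pos]; ring_nf
    have h22 : (2:ℝ) ^ (2:ℝ) = 4 := by
      rw [show (2:ℝ) = ((2:ℕ):ℝ) by norm_num, Real.rpow_natCast]; norm_num
    rw [this, h22, hbr]
    linarith [Real.rpow_pos_of_pos two_pos ((J:ℝ) + 2)]
  have hJ4 : (2:ℝ) ^ ((J:ℝ) + 4) ≤ (2:ℝ) ^ (Kr + (4 - c)) :=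
    Real.rpow_le_rpow_of_exponent_le one_le_two (by
      have : ((J:ℤ):ℝ) ≤ Kr - c := hJle
      linarith)
  have hKrpos : (0:ℝ) < (2:ℝ) ^ Kr := Real.rpow_pos_of_pos two_pos Kr
  have hsplit : (2:ℝ) ^ (Kr + (4 - c)) = (2:ℝ) ^ Kr * (2:ℝ) ^ ((4:ℝ) - c) := by
    rw [← Real.rpow_add two_pos]
  rcases hcase with ⟨he1, he2⟩ | ⟨he1, he2, hkmin⟩
  · subst he1; subst he2
    have hjb0m : m ≤ jb₀ := mass_le_jbracket m (le_of_lt hm) ξ₀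
    have hjb1 : 0 ≤ jb₁ := jbracket_nonneg M ξ₁
    have hjb2 : 0 ≤ jb₂ := jbracket_nonneg M (ξ₀ + ξ₁)
    have hlow : (2:ℝ) ^ Kr * δ ≤ jb₀ + jb₁ + jb₂ := by
      rcases Nat.eq_zero_or_pos (max k (max k₁ k₂)) with hN | hN
      · have hKr0 : Kr = 0 := by rw [hKrN, hN]; norm_num
        rw [hKr0, Real.rpow_zero, one_mul]
        linarith only [hjb0m, hjb1, hjb2, hδm]
      · have hquarter : (2:ℝ) ^ Kr * δ ≤ (2:ℝ) ^ (Kr - 2) := by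
          have hs : (2:ℝ) ^ (Kr - 2) = (2:ℝ) ^ Kr * (2:ℝ) ^ (-2:ℝ) := by
            rw [← Real.rpow_add two_pos]; ring_nf
          have h4 : (2:ℝ) ^ (-2:ℝ) = 1/4 := by
            rw [show (-2:ℝ) = ((-2:ℤ):ℝ) by norm_num, Real.rpow_intCast]; norm_num
          rw [hs, h4]
          exact mul_le_mul_of_nonneg_left hδ4 hKrpos.le
        refine le_trans hquarter ?_
        rcases max_choice k (max k₁ k₂) with he | he
        · have h1k : 1 ≤ k := by rw [he] at hN; exact hN
          have hnorm := hA2 h1k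
          have hkr : (2:ℝ) ^ (Kr - 2) = (2:ℝ) ^ ((k:ℤ) - 2) := by
            rw [hKrN, he, rpow_eq_zpow_sub2]
          have hn := norm_le_jbracket m ξ₀
          rw [hkr]; linarith only [hnorm, hn, hjb1, hjb2]
        · rcases max_choice k₁ k₂ with he' | he'
          · have h1k : 1 ≤ k₁ := by rw [he, he'] at hN; exact hN
            have hnorm := hB2 h1k
            have hkr : (2:ℝ) ^ (Kr - 2) = (2:ℝ) ^ ((k₁:ℤ) - 2) := by
              rw [hKrN, he, he', rpow_eq_zpow_sub2]
            have hn := norm_le_jbracket M ξ₁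
            rw [hkr]; linarith only [hnorm, hn, hjb0m, hjb2, hm]
          · have h1k : 1 ≤ k₂ := by rw [he, he'] at hN; exact hN
            have hnorm := hC2 h1k
            have hkr : (2:ℝ) ^ (Kr - 2) = (2:ℝ) ^ ((k₂:ℤ) - 2) := by
              rw [hKrN, he, he', rpow_eq_zpow_sub2]
            have hn := norm_le_jbracket M (ξ₀ + ξ₁)
            rw [hkr]; linarith only [hnorm, hn, hjb0m, hjb1, hm]
    have hup : jb₀ + jb₁ + jb₂ ≤ (2:ℝ) ^ Kr * (2:ℝ) ^ ((4:ℝ) - c) := by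
      have hsum : jb₀ + jb₁ + jb₂ ≤ 3 * b := by
        linarith only [hm0b, hm1b, hm2a]
      linarith only [hsum, h3b, hJ4, hsplit]
    have hfin : δ ≤ (2:ℝ) ^ ((4:ℝ) - c) :=
      (mul_le_mul_iff_right₀ hKrpos).mp (le_trans hlow hup)
    linarith only [hfin, hcδ]
  · subst he1; subst he2
    have hminle : min (k₁:ℝ) (k₂:ℝ) ≤ Kr :=
      le_trans (min_le_left _ _) (le_trans (le_max_left _ _) (le_max_right _ _))
    have hk0 : (0:ℝ) ≤ (k:ℝ) := Nat.cast_nonneg k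
    have hk1R : (k:ℝ) + 1 ≤ (k₁:ℝ) := by
      have := min_le_left (k₁:ℝ) (k₂:ℝ); linarith
    have hk2R : (k:ℝ) + 1 ≤ (k₂:ℝ) := by
      have := min_le_right (k₁:ℝ) (k₂:ℝ); linarith
    have h1k₁ : 1 ≤ k₁ := by exact_mod_cast show (1:ℝ) ≤ (k₁:ℝ) by linarith
    have h1k₂ : 1 ≤ k₂ := by exact_mod_cast show (1:ℝ) ≤ (k₂:ℝ) by linarith
    have hkkN : k ≤ max k₁ k₂ := by
      have : (k:ℝ) ≤ ((max k₁ k₂ : ℕ):ℝ) := by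
        rw [Nat.cast_max]; exact le_trans (by linarith) (le_max_left _ _)
      exact_mod_cast this
    have hKr2 : Kr = ((max k₁ k₂ : ℕ):ℝ) := by
      rw [hKrN, max_eq_right hkkN]
    set P : ℝ := (2:ℝ) ^ (Kr - 2) with hPdef
    have hPpos : 0 < P := by rw [hPdef]; positivity
    have h2M : 2 * M ≤ jb₁ + jb₂ := by
      linarith only [mass_le_jbracket M hM.le ξ₁, mass_le_jbracket M hM.le (ξ₀ + ξ₁)]
    have hPle : P ≤ jb₁ + jb₂ := by
      rcases max_choice k₁ k₂ with he | he
      · have hnorm := hB2 h1k₁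
        have hkr : P = (2:ℝ) ^ ((k₁:ℤ) - 2) := by
          rw [hPdef, hKr2, he, rpow_eq_zpow_sub2]
        have hn := norm_le_jbracket M ξ₁
        rw [hkr]; linarith only [hnorm, hn, jbracket_nonneg M (ξ₀ + ξ₁)]
      · have hnorm := hC2 h1k₂
        have hkr : P = (2:ℝ) ^ ((k₂:ℤ) - 2) := by
          rw [hPdef, hKr2, he, rpow_eq_zpow_sub2]
        have hn := norm_le_jbracket M (ξ₀ + ξ₁)
        rw [hkr]; linarith only [hnorm, hn, jbracket_nonneg M ξ₁]
    have hjb0up : jb₀ ≤ (2:ℝ) ^ (Kr + (2 - c)) + m := by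
      have h1 := jbracket_le m hm.le ξ₀
      have h2 : ‖ξ₀‖ ≤ (2:ℝ) ^ ((k:ℝ) + 2) := by
        rw [rpow_eq_pow_add2]; exact hA1
      have h3 : (2:ℝ) ^ ((k:ℝ) + 2) ≤ (2:ℝ) ^ (Kr + (2 - c)) :=
        Real.rpow_le_rpow_of_exponent_le one_le_two (by
          linarith only [hkmin, hminle])
      linarith only [h1, h2, h3]
    have hsumup : jb₁ + jb₂ ≤ 3 * b + jb₀ := by
      linarith only [hm0a, hm1a, hm2b]
    have hsplit46 : (2:ℝ) ^ (Kr + (4 - c)) = P * (2:ℝ) ^ ((6:ℝ) - c) := by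
      rw [hPdef, ← Real.rpow_add two_pos]; ring_nf
    have hsplit24 : (2:ℝ) ^ (Kr + (2 - c)) = P * (2:ℝ) ^ ((4:ℝ) - c) := by
      rw [hPdef, ← Real.rpow_add two_pos]; ring_nf
    have h46 : (2:ℝ) ^ ((4:ℝ) - c) ≤ (2:ℝ) ^ ((6:ℝ) - c) :=
      Real.rpow_le_rpow_of_exponent_le one_le_two (by linarith)
    have h67 : (2:ℝ) ^ ((6:ℝ) - c) + (2:ℝ) ^ ((6:ℝ) - c) = (2:ℝ) ^ ((7:ℝ) - c) := by
      rw [show (7:ℝ) - c = 1 + ((6:ℝ) - c) by ring, Real.rpow_add two_pos, Real.rpow_one]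
      ring
    have hPr : P * (2:ℝ) ^ ((7:ℝ) - c) ≤ P * (ε / (4 * M)) :=
      mul_le_mul_of_nonneg_left hcε hPpos.le
    have hP46 : P * (2:ℝ) ^ ((4:ℝ) - c) ≤ P * (2:ℝ) ^ ((6:ℝ) - c) :=
      mul_le_mul_of_nonneg_left h46 hPpos.le
    have hP67 : P * (2:ℝ) ^ ((6:ℝ) - c) + P * (2:ℝ) ^ ((6:ℝ) - c)
        = P * (2:ℝ) ^ ((7:ℝ) - c) := by rw [← h67]; ring
    have hchain : jb₁ + jb₂ ≤ P * (ε / (4 * M)) + m := by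
      have c1 : jb₁ + jb₂ ≤ (2:ℝ) ^ (Kr + (4 - c)) + ((2:ℝ) ^ (Kr + (2 - c)) + m) := by
        linarith only [hsumup, h3b, hJ4, hjb0up]
      rw [hsplit46, hsplit24] at c1
      linarith only [c1, hP46, hP67, hPr]
    have e1 : 2 * M ≤ P * (ε / (4 * M)) + m := le_trans h2M hchain
    have e2 : P ≤ P * (ε / (4 * M)) + m := le_trans hPle hchain
    have hrpos : 0 < ε / (4 * M) := hεM
    have hreq : (ε / (4 * M)) * (4 * M) = 2 * M - m := by
      rw [div_mul_cancel₀ _ (by positivity : (4:ℝ) * M ≠ 0)]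
    have hP4M : 4 * M ≤ P := by
      have h1 : (ε / (4 * M)) * (4 * M) ≤ (ε / (4 * M)) * P := by
        calc (ε / (4 * M)) * (4 * M) = 2 * M - m := hreq
          _ ≤ P * (ε / (4 * M)) := by linarith only [e1]
          _ = (ε / (4 * M)) * P := mul_comm _ _
      exact le_of_mul_le_mul_left h1 hrpos
    have hrhalf : ε / (4 * M) ≤ 1 / 2 := by
      rw [div_le_iff₀ (by linarith : (0:ℝ) < 4 * M)]
      simp only [hεdef]; linarith
    have hPr2 : P * (ε / (4 * M)) ≤ P * (1 / 2) :=
      mul_le_mul_of_nonneg_left hrhalf hPpos.le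
    linarith only [e2, hPr2, hP4M, hmM, hm]

/-- Case 1 of the modulation lemma: with signs `(s₁,s₂) = (+,−)`, or `(s₁,s₂) = (−,+)` and
`k ≪ min(k₁,k₂)`, if all modulations are far below `2^{max(k,k₁,k₂)}` then the trilinear
integral vanishes. -/
theorem trilinear_vanishing_case1 (m M : ℝ) (hm : 0 < m) (hmM : m < 2 * M) :
    ∃ c > (0 : ℝ), ∀ s₁ s₂ : ℝ, (s₁ = 1 ∨ s₁ = -1) → (s₂ = 1 ∨ s₂ = -1) →
      ∀ k k₁ k₂ : ℕ, ∀ j j₁ j₂ : ℤ,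
        ∀ φ u₁ u₂ : SchwartzMap SpaceTime ℂ,
          Function.support (spacetimeFT ⇑φ) ⊆ kgRegion m 1 k j →
          Function.support (spacetimeFT ⇑u₁) ⊆ kgRegion M s₁ k₁ j₁ →
          Function.support (spacetimeFT ⇑u₂) ⊆ kgRegion M s₂ k₂ j₂ →
          ((s₁ = 1 ∧ s₂ = -1) ∨
            (s₁ = -1 ∧ s₂ = 1 ∧ (k : ℝ) ≤ min (k₁ : ℝ) (k₂ : ℝ) - c)) →
          ((max j (max j₁ j₂) : ℤ) : ℝ) ≤ max (k : ℝ) (max (k₁ : ℝ) (k₂ : ℝ)) - c →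
          ∫ z : SpaceTime, φ z * u₁ z * (starRingEnd ℂ) (u₂ z) = 0 := by
  obtain ⟨c, hc, hgeom⟩ := geom m M hm hmM
  refine ⟨c, hc, ?_⟩
  intro s₁ s₂ hs₁ hs₂ k k₁ k₂ j j₁ j₂ φ u₁ u₂ hφ hu₁ hu₂ hcase hJ
  apply key_vanish
  intro ζ η h0 h1
  by_contra h2
  have hA := supp_transfer hφ h0
  have hB := supp_transfer hu₁ h1
  have hC := supp_transfer hu₂ h2
  rw [smul_add] at hC
  exact hgeom s₁ s₂ hs₁ hs₂ k k₁ k₂ j j₁ j₂ hcase hJ _ _ hA hB hC
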